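/- Let 𝔩 be a finite-dimensional Lie algebra with subalgebras 𝔥 and 𝔫 such that 𝔩 = 𝔥 ⊕ 𝔫 as vector spaces. Identify 𝔫* with the annihilator 𝔥⁰ = {f ∈ 𝔩* : f|_𝔥 = 0} ⊂ 𝔩*, and accordingly identify ∧ᵏ𝔫* with a subspace of ∧ᵏ𝔩*. If f ∈ ∧ᵏ𝔫* is 𝔥-invariant (for the action of 𝔥 on 𝔫* dual to the projection of ad to 𝔫), then the Chevalley–Eilenberg differential of 𝔩 applied to the extension f̄ of f equals the extension of the Chevalley–Eilenberg differential of the Lie algebra 𝔫 applied to f: d_𝔩 f̄ = (d_𝔫 f)‾. -/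

import Mathlib

/-- Skipping two indices `i < j`. -/
def skip2 (i j m : ℕ) : ℕ := if m < i then m else if m + 1 < j then m + 1 else m + 2

theorem skip2_le (i j m : ℕ) : skip2 i j m ≤ m + 2 := by
  unfold skip2; split_ifs <;> omega

/-- The Chevalley–Eilenberg differential with trivial coefficients on `k`-cochains:
`(d g)(a₁,…,a_{k+1}) = Σ_{i<j} (−1)^{i+j} g([a_i,a_j], a₁,…,â_i,…,â_j,…,a_{k+1})`. -/
noncomputable def ceDiff (K : Type*) [Field K] {M : Type*} [LieRing M] (k : ℕ)
    (f : (Fin k → M) → K) : (Fin (k + 1) → M) → K :=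
  fun a => ∑ i : Fin (k + 1), ∑ j : Fin (k + 1),
    if (i : ℕ) < (j : ℕ) then
      ((-1 : K)) ^ ((i : ℕ) + (j : ℕ)) *
        f (fun m =>
          if hm : (m : ℕ) = 0 then ⁅a i, a j⁆
          else a ⟨skip2 (i : ℕ) (j : ℕ) ((m : ℕ) - 1), by
            have h1 := skip2_le (i : ℕ) (j : ℕ) ((m : ℕ) - 1)
            have h2 := m.isLt
            omega⟩)
    else 0

/-- The projection `π_𝔫 : 𝔩 → 𝔫` along `𝔥`, for a vector space decomposition `𝔩 = 𝔥 ⊕ 𝔫`. -/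
noncomputable def projN {K : Type*} [Field K] {L : Type*} [LieRing L] [LieAlgebra K L]
    (h n : LieSubalgebra K L) (hc : IsCompl h.toSubmodule n.toSubmodule) (z : L) : n :=
  ⟨(Submodule.linearProjOfIsCompl n.toSubmodule h.toSubmodule hc.symm z : L),
   (Submodule.linearProjOfIsCompl n.toSubmodule h.toSubmodule hc.symm z).2⟩

/-- The action of `x ∈ 𝔩` (in practice `x ∈ 𝔥`) on `𝔫`: `x·ξ = π_𝔫 ⁅x, ξ⁆`. -/
noncomputable def hAct {K : Type*} [Field K] {L : Type*} [LieRing L] [LieAlgebra K L]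
    (h n : LieSubalgebra K L) (hc : IsCompl h.toSubmodule n.toSubmodule)
    (x : L) (ξ : n) : n :=
  projN h n hc ⁅x, (ξ : L)⁆

theorem succAbove_val {k : ℕ} (i : Fin (k+2)) (p : Fin (k+1)) :
    ((i.succAbove p : Fin (k+2)) : ℕ) = if (p:ℕ) < (i:ℕ) then (p:ℕ) else (p:ℕ)+1 := by
  rcases lt_or_ge ((p:ℕ)) ((i:ℕ)) with hlt | hge
  · rw [if_pos hlt, Fin.succAbove_of_castSucc_lt _ _
      (by rw [Fin.lt_def, Fin.coe_castSucc]; exact hlt), Fin.coe_castSucc]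
  · rw [if_neg (not_lt.2 hge), Fin.succAbove_of_le_castSucc _ _
      (by rw [Fin.le_def, Fin.coe_castSucc]; exact hge), Fin.val_succ]

theorem move_front {K : Type*} [Field K] {M : Type*} [AddCommGroup M] [Module K M]
    {k : ℕ} (g : AlternatingMap K M K (Fin (k + 1))) (z : Fin (k + 1) → M)
    (p : Fin (k + 1)) (ξ : M) :
    g (Function.update z p ξ) =
      (-1 : K) ^ (p : ℕ) *
        g (fun m => if _ : (m : ℕ) = 0 then ξ else
            z ⟨if (m : ℕ) - 1 < (p : ℕ) then (m : ℕ) - 1 else (m : ℕ), by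
              have := m.isLt; have := p.isLt; split_ifs <;> omega⟩) := by
  classical
  have hfun : Function.update z p ξ =
      (fun m : Fin (k+1) => if _ : (m : ℕ) = 0 then ξ else
            z ⟨if (m : ℕ) - 1 < (p : ℕ) then (m : ℕ) - 1 else (m : ℕ), by
              have := m.isLt; have := p.isLt; split_ifs <;> omega⟩) ∘ p.cycleRange := by
    funext m
    rcases lt_trichotomy m p with hlt | heq | hgt
    · rw [Function.update_of_ne (ne_of_lt hlt)]
      have h1 : p.cycleRange m = m + 1 := Fin.cycleRange_of_lt hlt
      have h2 : ((m + 1 : Fin (k+1)) : ℕ) = (m : ℕ) + 1 :=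
        Fin.val_add_one_of_lt (lt_of_lt_of_le hlt (Fin.le_last p))
      have hlt' : (m : ℕ) < (p : ℕ) := hlt
      simp only [Function.comp_apply, h1]
      rw [dif_neg (by omega)]
      have h3 : (if ((m + 1 : Fin (k+1)) : ℕ) - 1 < (p : ℕ)
          then ((m + 1 : Fin (k+1)) : ℕ) - 1 else ((m + 1 : Fin (k+1)) : ℕ)) = (m : ℕ) := by
        rw [h2]; simp [hlt']
      congr 1
      exact Fin.ext h3.symm
    · subst heq
      simp only [Function.comp_apply, Fin.cycleRange_self, Function.update_self]
      simp
    · have h1 : p.cycleRange m = m := Fin.cycleRange_of_gt hgt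
      have hgt' : (p : ℕ) < (m : ℕ) := hgt
      rw [Function.update_of_ne (ne_of_gt hgt)]
      simp only [Function.comp_apply, h1]
      rw [dif_neg (by omega)]
      have h3 : (if (m : ℕ) - 1 < (p : ℕ) then (m : ℕ) - 1 else (m : ℕ)) = (m : ℕ) := by
        rw [if_neg (by omega)]
      congr 1
      exact Fin.ext h3.symm
  rw [hfun, AlternatingMap.map_perm, Fin.sign_cycleRange]
  rcases Nat.even_or_odd (p : ℕ) with he | ho
  · simp [he.neg_one_pow]
  · simp [ho.neg_one_pow, Units.smul_def]

theorem ce_aux {K : Type*} [Field K] {M : Type*} [AddCommGroup M] [Module K M] {k : ℕ}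
    (f : AlternatingMap K M K (Fin (k + 1)))
    (y : Fin (k + 2) → M) (b : Fin (k + 2) → Fin (k + 2) → M)
    (g : Fin (k + 2) → M → M)
    (hg : ∀ i, ∀ z : Fin (k + 1) → M,
      ∑ p : Fin (k + 1), f (Function.update z p (g i (z p))) = 0) :
    (∑ i : Fin (k+2), ∑ j : Fin (k+2),
      if (i:ℕ) < (j:ℕ) then (-1:K)^((i:ℕ)+(j:ℕ)) *
        f (fun m => if hm : (m:ℕ) = 0 then b i j + g i (y j) - g j (y i)
            else y ⟨skip2 (i:ℕ) (j:ℕ) ((m:ℕ)-1), by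
              have h1 := skip2_le (i:ℕ) (j:ℕ) ((m:ℕ)-1); have h2 := m.isLt; omega⟩)
      else 0)
    = ∑ i : Fin (k+2), ∑ j : Fin (k+2),
      if (i:ℕ) < (j:ℕ) then (-1:K)^((i:ℕ)+(j:ℕ)) *
        f (fun m => if hm : (m:ℕ) = 0 then b i j
            else y ⟨skip2 (i:ℕ) (j:ℕ) ((m:ℕ)-1), by
              have h1 := skip2_le (i:ℕ) (j:ℕ) ((m:ℕ)-1); have h2 := m.isLt; omega⟩)
      else 0 := by
  classical
  have hidx : ∀ (i j : Fin (k+2)) (m : Fin (k+1)), (m:ℕ) ≠ 0 →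
      skip2 (i:ℕ) (j:ℕ) ((m:ℕ)-1) < k+2 := by
    intro i j m hm
    have h1 := skip2_le (i:ℕ) (j:ℕ) ((m:ℕ)-1); have h2 := m.isLt; omega
  have hfin : ∀ (i : Fin (k+2)) (s : ℕ) (hs : s < k+1) (t : ℕ) (ht : t < k+2),
      t = (if s < (i:ℕ) then s else s+1) → (⟨t, ht⟩ : Fin (k+2)) = i.succAbove ⟨s, hs⟩ := by
    intro i s hs t ht hteq
    apply Fin.ext
    rw [succAbove_val]
    exact hteq
  set T : Fin (k+2) → Fin (k+2) → M → (Fin (k+1) → M) := fun i j w m =>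
    if hm : (m:ℕ) = 0 then w else y ⟨skip2 (i:ℕ) (j:ℕ) ((m:ℕ)-1), hidx i j m hm⟩ with hT
  have hupd : ∀ (i j : Fin (k+2)) (w w' : M),
      Function.update (T i j w') (0 : Fin (k+1)) w = T i j w := by
    intro i j w w'
    funext m
    by_cases hm : m = (0 : Fin (k+1))
    · subst hm
      rw [Function.update_self]
      simp [hT]
    · rw [Function.update_of_ne hm]
      have hm' : (m : ℕ) ≠ 0 := fun hc0 => hm (Fin.ext hc0)
      simp only [hT]
      rw [dif_neg hm', dif_neg hm']
  set S1 : Fin (k+2) → Fin (k+2) → K := fun i j =>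
    if (i:ℕ) < (j:ℕ) then (-1:K)^((i:ℕ)+(j:ℕ)) * f (T i j (g i (y j))) else 0 with hS1
  set S2 : Fin (k+2) → Fin (k+2) → K := fun i j =>
    if (i:ℕ) < (j:ℕ) then (-1:K)^((i:ℕ)+(j:ℕ)) * f (T i j (g j (y i))) else 0 with hS2
  -- the final combinatorial identity
  have hfinal : ∑ i : Fin (k+2), ∑ j : Fin (k+2), (S1 i j - S2 i j) = 0 := by
    have e1 : ∑ i : Fin (k+2), ∑ j : Fin (k+2), (S1 i j - S2 i j)
        = (∑ i : Fin (k+2), ∑ j : Fin (k+2), S1 i j)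
          - ∑ i : Fin (k+2), ∑ j : Fin (k+2), S2 i j := by
      simp only [Finset.sum_sub_distrib]
    rw [e1, show (∑ i : Fin (k+2), ∑ j : Fin (k+2), S2 i j)
        = ∑ i : Fin (k+2), ∑ j : Fin (k+2), S2 j i from Finset.sum_comm]
    rw [← Finset.sum_sub_distrib]
    simp only [← Finset.sum_sub_distrib]
    refine Finset.sum_eq_zero fun i _ => ?_
    rw [Fin.sum_univ_succAbove (fun j => S1 i j - S2 j i) i]
    have hz : S1 i i - S2 i i = 0 := by
      simp [hS1, hS2]
    rw [hz, zero_add]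
    have hkey : ∀ p : Fin (k+1), S1 i (i.succAbove p) - S2 (i.succAbove p) i
        = (-1:K)^((i:ℕ)+1) *
            f (Function.update (fun t => y (i.succAbove t)) p (g i (y (i.succAbove p)))) := by
      intro p
      rw [move_front f (fun t => y (i.succAbove t)) p (g i (y (i.succAbove p)))]
      by_cases hpi : (p:ℕ) < (i:ℕ)
      · have hjv : ((i.succAbove p : Fin (k+2)) : ℕ) = (p:ℕ) := by
          rw [succAbove_val, if_pos hpi]
        have h1 : S1 i (i.succAbove p) = 0 := by
          simp only [hS1]
          rw [if_neg (by rw [hjv]; omega)]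
        have h2 : S2 (i.succAbove p) i
            = (-1:K)^((p:ℕ)+(i:ℕ)) * f (T (i.succAbove p) i (g i (y (i.succAbove p)))) := by
          simp only [hS2]
          rw [if_pos (by rw [hjv]; omega), hjv]
        have htup : T (i.succAbove p) i (g i (y (i.succAbove p)))
            = (fun m : Fin (k+1) => if _ : (m : ℕ) = 0 then g i (y (i.succAbove p)) else
                (fun t => y (i.succAbove t))
                  ⟨if (m : ℕ) - 1 < (p : ℕ) then (m : ℕ) - 1 else (m : ℕ), by
                    have := m.isLt; have := p.isLt; split_ifs <;> omega⟩) := by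
          funext m
          by_cases hm : (m:ℕ) = 0
          · simp only [hT]
            rw [dif_pos hm, dif_pos hm]
          · simp only [hT]
            rw [dif_neg hm, dif_neg hm]
            show y _ = y (i.succAbove _)
            congr 1
            refine hfin i _ _ _ _ ?_
            have hm1 := m.isLt
            have hp1 := p.isLt
            rw [hjv]
            simp only [skip2]
            split_ifs <;> omega
        rw [h1, h2, htup]
        ring
      · have hjv : ((i.succAbove p : Fin (k+2)) : ℕ) = (p:ℕ)+1 := by
          rw [succAbove_val, if_neg hpi]
        have h2 : S2 (i.succAbove p) i = 0 := by
          simp only [hS2]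
          rw [if_neg (by rw [hjv]; omega)]
        have h1 : S1 i (i.succAbove p)
            = (-1:K)^((i:ℕ)+((p:ℕ)+1)) * f (T i (i.succAbove p) (g i (y (i.succAbove p)))) := by
          simp only [hS1]
          rw [if_pos (by rw [hjv]; omega), hjv]
        have htup : T i (i.succAbove p) (g i (y (i.succAbove p)))
            = (fun m : Fin (k+1) => if _ : (m : ℕ) = 0 then g i (y (i.succAbove p)) else
                (fun t => y (i.succAbove t))
                  ⟨if (m : ℕ) - 1 < (p : ℕ) then (m : ℕ) - 1 else (m : ℕ), by
                    have := m.isLt; have := p.isLt; split_ifs <;> omega⟩) := by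
          funext m
          by_cases hm : (m:ℕ) = 0
          · simp only [hT]
            rw [dif_pos hm, dif_pos hm]
          · simp only [hT]
            rw [dif_neg hm, dif_neg hm]
            show y _ = y (i.succAbove _)
            congr 1
            refine hfin i _ _ _ _ ?_
            have hm1 := m.isLt
            have hp1 := p.isLt
            have hi1 := i.isLt
            rw [hjv]
            simp only [skip2]
            split_ifs <;> omega
        rw [h1, h2, htup]
        ring
    rw [Finset.sum_congr rfl fun p _ => hkey p, ← Finset.mul_sum]
    have h6 : ∑ p : Fin (k+1),
        f (Function.update (fun t => y (i.succAbove t)) p (g i (y (i.succAbove p)))) = 0 :=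
      hg i (fun t => y (i.succAbove t))
    rw [h6, mul_zero]
  -- split each left-hand term
  rw [← sub_eq_zero, ← Finset.sum_sub_distrib]
  refine Eq.trans (Finset.sum_congr rfl fun i _ => ?_) hfinal
  rw [← Finset.sum_sub_distrib]
  refine Finset.sum_congr rfl fun j _ => ?_
  show (if (i:ℕ) < (j:ℕ) then (-1:K)^((i:ℕ)+(j:ℕ)) *
          f (T i j (b i j + g i (y j) - g j (y i))) else 0)
      - (if (i:ℕ) < (j:ℕ) then (-1:K)^((i:ℕ)+(j:ℕ)) * f (T i j (b i j)) else 0)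
      = S1 i j - S2 i j
  by_cases hij : (i:ℕ) < (j:ℕ)
  · simp only [hS1, hS2]
    rw [if_pos hij, if_pos hij, if_pos hij, if_pos hij]
    have hsub := f.map_update_sub (T i j (0:M)) (0 : Fin (k+1)) (b i j + g i (y j)) (g j (y i))
    have hadd := f.map_update_add (T i j (0:M)) (0 : Fin (k+1)) (b i j) (g i (y j))
    rw [hupd, hupd, hupd] at hsub
    rw [hupd, hupd, hupd] at hadd
    rw [hsub, hadd]
    ring
  · simp only [hS1, hS2]
    rw [if_neg hij, if_neg hij, if_neg hij, if_neg hij]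

section main
variable {K : Type*} [Field K] {L : Type*} [LieRing L] [LieAlgebra K L]
    (h n : LieSubalgebra K L)
    (hc : IsCompl h.toSubmodule n.toSubmodule)

theorem πadd (u v : L) : projN h n hc (u + v) = projN h n hc u + projN h n hc v := by
  apply Subtype.ext
  simp [projN, map_add]

theorem πsub (u v : L) : projN h n hc (u - v) = projN h n hc u - projN h n hc v := by
  apply Subtype.ext
  simp [projN, map_sub]

theorem πmemn (w : L) (hw : w ∈ n) : projN h n hc w = ⟨w, hw⟩ := by
  apply Subtype.ext
  have := Submodule.projectionOnto_apply_left hc.symm (⟨w, hw⟩ : n.toSubmodule)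
  simp only [projN]
  exact congrArg Subtype.val this

theorem πmemh (w : L) (hw : w ∈ h) : projN h n hc w = 0 := by
  apply Subtype.ext
  have := Submodule.projectionOnto_apply_of_mem_right hc.symm hw
  simp only [projN]
  exact congrArg Subtype.val this

theorem xmem (w : L) : w - (projN h n hc w : L) ∈ h := by
  have := Submodule.projection_add_projection_eq_self hc w
  have h2 : w - (projN h n hc w : L)
      = ((h.toSubmodule.linearProjOfIsCompl n.toSubmodule hc w : L)) := by
    nth_rewrite 1 [← this]; simp only [projN]; exact add_sub_cancel_right _ _
  rw [h2]
  exact (h.toSubmodule.linearProjOfIsCompl n.toSubmodule hc w).2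

theorem brdec (u v : L) :
    projN h n hc ⁅u, v⁆ =
      ⁅projN h n hc u, projN h n hc v⁆
        + hAct h n hc (u - (projN h n hc u : L)) (projN h n hc v)
        - hAct h n hc (v - (projN h n hc v : L)) (projN h n hc u) := by
  set yu := projN h n hc u with hyu
  set yv := projN h n hc v with hyv
  set xu := u - (yu : L) with hxu
  set xv := v - (yv : L) with hxv
  have hu : u = xu + (yu : L) := by rw [hxu]; abel
  have hv : v = xv + (yv : L) := by rw [hxv]; abel
  have hexp : ⁅u, v⁆ = ⁅xu, xv⁆ + (⁅xu, (yv : L)⁆ + (⁅(yu : L), (yv : L)⁆ - ⁅xv, (yu : L)⁆)) := by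
    conv_lhs => rw [hu, hv]
    rw [add_lie, lie_add, lie_add]
    rw [← lie_skew xv (yu : L)]
    abel
  rw [hexp, πadd h n hc, πadd h n hc, πsub h n hc]
  have h1 : projN h n hc ⁅xu, xv⁆ = 0 :=
    πmemh h n hc _ (h.lie_mem (xmem h n hc u) (xmem h n hc v))
  have h2 : projN h n hc ⁅(yu : L), (yv : L)⁆ = ⁅yu, yv⁆ :=
    πmemn h n hc _ (n.lie_mem yu.2 yv.2)
  rw [h1, h2]
  show 0 + (hAct h n hc xu yv + (⁅yu, yv⁆ - hAct h n hc xv yu)) = _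
  abel

end main

/- STATEMENT 4: for `𝔩 = 𝔥 ⊕ 𝔫` and an `𝔥`-invariant `f ∈ ∧ᵏ𝔫*`, the Chevalley–Eilenberg
differential of `𝔩` applied to the extension `f̄` (given by `f̄(a) = f(π_𝔫 ∘ a)`, i.e. the
identification `𝔫* ≅ 𝔥⁰`) equals the extension of the Chevalley–Eilenberg differential of
`𝔫` applied to `f`:  `d_𝔩 f̄ = (d_𝔫 f)‾`. -/
theorem ce_differential_commutes_with_extension
    {K : Type*} [Field K] {L : Type*} [LieRing L] [LieAlgebra K L]
    (h n : LieSubalgebra K L)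
    (hc : IsCompl h.toSubmodule n.toSubmodule)
    (k : ℕ) (f : AlternatingMap K n K (Fin k))
    -- `f` is `𝔥`-invariant
    (hinv : ∀ x ∈ h, ∀ y : Fin k → n,
      ∑ i : Fin k, f (Function.update y i (hAct h n hc x (y i))) = 0) :
    ∀ a : Fin (k + 1) → L,
      ceDiff K k (fun b : Fin k → L => f (fun i => projN h n hc (b i))) a =
        ceDiff K k (⇑f) (fun i => projN h n hc (a i)) := by
  rcases k with _ | k
  · intro a
    simp [ceDiff]
  intro a
  classical
  have key := ce_aux f (fun m => projN h n hc (a m))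
    (fun i j => ⁅projN h n hc (a i), projN h n hc (a j)⁆)
    (fun i ξ => hAct h n hc (a i - (projN h n hc (a i) : L)) ξ)
    (fun i z => hinv _ (xmem h n hc (a i)) z)
  simp only [ceDiff]
  refine Eq.trans ?_ key
  refine Finset.sum_congr rfl fun i _ => Finset.sum_congr rfl fun j _ => ?_
  by_cases hij : (i:ℕ) < (j:ℕ)
  · rw [if_pos hij, if_pos hij]
    refine congrArg (fun t => ((-1:K)) ^ ((i:ℕ)+(j:ℕ)) * f t) ?_
    funext m
    by_cases hm : (m:ℕ) = 0
    · rw [dif_pos hm, dif_pos hm]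
      exact brdec h n hc (a i) (a j)
    · rw [dif_neg hm, dif_neg hm]
  · rw [if_neg hij, if_neg hij]
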